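/- (Theorem 1, static error resilience of Construction I) Let k, α, t, M be positive integers with 2tα ≤ kα − M, set N = kα, and let K be a finite field with q^m elements, m ≥ N. Let g_1, …, g_N ∈ K be linearly independent over F_q. For j = 1, 2 let f_j(x) = Σ_{i=0}^{M−1} a_i^{(j)} x^{q^i} be a linearized polynomial of q-degree at most M − 1, let G be an invertible N × N matrix with entries in F_q, let e_j ∈ K^{tα}, and let B_j be tα × N matrices with entries in F_q. If (f_1(g_1), …, f_1(g_N))·G + e_1 B_1 = (f_2(g_1), …, f_2(g_N))·G + e_2 B_2, then a_i^{(1)} = a_i^{(2)} for all 0 ≤ i ≤ M − 1. That is, when the outer [N = kα, M, D = N − M + 1] Gabidulin code satisfies 2tα + 1 ≤ D, the original file can be recovered from the contents of any k nodes of the concatenated scheme despite t statically corrupted nodes, each of which (together with error propagation through node repairs with coefficients over F_q) contributes an error of rank at most α. -/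

import Mathlib

/-- The subfield `F_q = {a ∈ K : a ^ q = a}` of a field `K` of characteristic `p`,
where `q = p ^ e`. -/
def Fqsub (p e : ℕ) (K : Type*) [Field K] [Fact p.Prime] [CharP K p] : Subfield K where
  carrier := {x : K | x ^ p ^ e = x}
  mul_mem' := by
    intro a b ha hb
    simp only [Set.mem_setOf_eq] at *
    rw [mul_pow, ha, hb]
  one_mem' := by simp
  add_mem' := by
    intro a b ha hb
    haveI : ExpChar K p := ExpChar.prime Fact.out
    simp only [Set.mem_setOf_eq] at *
    rw [add_pow_expChar_pow, ha, hb]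
  zero_mem' := by
    simp only [Set.mem_setOf_eq]
    exact zero_pow (pow_ne_zero _ (Nat.Prime.ne_zero Fact.out))
  neg_mem' := by
    intro a ha
    haveI : ExpChar K p := ExpChar.prime Fact.out
    simp only [Set.mem_setOf_eq] at *
    calc (-a) ^ p ^ e = (0 - a) ^ p ^ e := by rw [zero_sub]
    _ = 0 ^ p ^ e - a ^ p ^ e := sub_pow_expChar_pow 0 a e
    _ = -a := by
        rw [ha, zero_pow (pow_ne_zero _ (Nat.Prime.ne_zero (Fact.out : p.Prime))), zero_sub]
  inv_mem' := by
    intro x hx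
    simp only [Set.mem_setOf_eq] at *
    rw [inv_pow, hx]

/-- The rank over `F_q` of a vector `v ∈ K^N`: the dimension over `F_q` of the
`F_q`-linear span of its coordinates. -/
noncomputable def rankFq (p e : ℕ) (K : Type*) [Field K] [Fact p.Prime] [CharP K p]
    {N : ℕ} (v : Fin N → K) : ℕ :=
  Module.finrank (Fqsub p e K) (Submodule.span (Fqsub p e K) (Set.range v))

open Polynomial

lemma fq_pow_fixed (p e : ℕ) (K : Type*) [Field K] (s : K) (hs : s ^ p ^ e = s) (l : ℕ) :
    s ^ (p ^ e) ^ l = s := by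
  induction l with
  | zero => simp
  | succ l ih => rw [pow_succ, pow_mul, ih, hs]

noncomputable def linPoly (p e : ℕ) (K : Type*) [Field K] [Fact p.Prime] [CharP K p]
    {M : ℕ} (c : Fin M → K) (F : Subfield K) (hF : ∀ s : K, s ∈ F → s ^ p ^ e = s) :
    K →ₗ[F] K where
  toFun x := ∑ l, c l * x ^ (p ^ e) ^ (l : ℕ)
  map_add' x y := by
    haveI : ExpChar K p := ExpChar.prime Fact.out
    rw [← Finset.sum_add_distrib]
    apply Finset.sum_congr rfl
    intro l _
    have h : ((p : ℕ) ^ e) ^ (l : ℕ) = p ^ (e * (l : ℕ)) := (pow_mul p e l).symm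
    rw [h, add_pow_expChar_pow, mul_add]
  map_smul' s x := by
    show ∑ l, c l * ((s : K) * x) ^ (p ^ e) ^ (l : ℕ) = (s : K) * ∑ l, c l * x ^ (p ^ e) ^ (l : ℕ)
    rw [Finset.mul_sum]
    apply Finset.sum_congr rfl
    intro l _
    rw [mul_pow, fq_pow_fixed p e K (s : K) (hF s s.2) l]
    ring

lemma finrank_span_range_le (K : Type*) [Field K] [Finite K] (F : Subfield K)
    {ι : Type*} [Fintype ι] (u : ι → K) :
    Module.finrank F (Submodule.span F (Set.range u)) ≤ Fintype.card ι := by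
  classical
  have : Fintype K := Fintype.ofFinite K
  have : FiniteDimensional F K := ⟨⟨Finset.univ, by rw [Finset.coe_univ, Submodule.span_univ]⟩⟩
  rw [← Fintype.range_linearCombination (R := F) (v := u)]
  simpa using LinearMap.finrank_range_le (Fintype.linearCombination F u)

lemma card_Fqsub_ge (p e m : ℕ) [Fact p.Prime] (he : 1 ≤ e)
    (K : Type*) [Field K] [Fintype K] [CharP K p]
    (hcard : Fintype.card K = (p ^ e) ^ m)
    (F : Subfield K) [Fintype F] (hF : ∀ x : K, x ^ p ^ e = x → x ∈ F) :
    p ^ e ≤ Fintype.card F := by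
  classical
  have hp1 : 1 < p := (Fact.out : p.Prime).one_lt
  have he0 : e ≠ 0 := by omega
  have hq1 : 1 < p ^ e := Nat.one_lt_pow he0 hp1
  set q : ℕ := p ^ e with hq
  set A : K[X] := X ^ q - X with hA
  have hdvd : A ∣ (X : K[X]) ^ Fintype.card K - X := by
    rw [hcard]
    have h1 : ((X : K[X]) ^ (q - 1) - 1) ∣ (X ^ (q ^ m - 1) - 1) := by
      obtain ⟨s, hs⟩ := Nat.sub_dvd_pow_sub_pow q 1 m
      rw [one_pow] at hs
      rw [hs, pow_mul]
      simpa using sub_dvd_pow_sub_pow ((X : K[X]) ^ (q - 1)) 1 s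
    have hXA : A = X * ((X : K[X]) ^ (q - 1) - 1) := by
      rw [mul_sub, mul_one, ← pow_succ', Nat.sub_add_cancel hq1.le, hA]
    have hXB : (X : K[X]) ^ q ^ m - X = X * ((X : K[X]) ^ (q ^ m - 1) - 1) := by
      rw [mul_sub, mul_one, ← pow_succ', Nat.sub_add_cancel (Nat.one_le_pow _ _ (by positivity))]
    rw [hXA, hXB]
    exact mul_dvd_mul_left _ h1
  have hB0 : ((X : K[X]) ^ Fintype.card K - X) ≠ 0 :=
    FiniteField.X_pow_card_sub_X_ne_zero K Fintype.one_lt_card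
  have hBsplits : ((X : K[X]) ^ Fintype.card K - X).Splits := by
    apply splits_iff_card_roots.mpr
    rw [FiniteField.roots_X_pow_card_sub_X,
      FiniteField.X_pow_card_sub_X_natDegree_eq K Fintype.one_lt_card]
    simp
  have hAsplits : A.Splits := Splits.of_dvd hBsplits hB0 hdvd
  have hsep : A.Separable := galois_poly_separable p q (dvd_pow_self p he0)
  have hcardroot : Fintype.card (A.rootSet K) = q := by
    rw [card_rootSet_eq_natDegree hsep (by rw [Algebra.algebraMap_self, map_id]; exact hAsplits),
      FiniteField.X_pow_card_sub_X_natDegree_eq K hq1]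
  rw [← hcardroot]
  apply Fintype.card_le_of_injective (fun x => (⟨x.1, by
    have hx := x.2
    rw [mem_rootSet] at hx
    apply hF
    have := hx.2
    simpa [hA, sub_eq_zero] using this⟩ : F))
  intro x y hxy
  exact Subtype.ext (by simpa using congrArg Subtype.val hxy)

set_option maxHeartbeats 1000000 in
/-- Theorem 1: static error resilience of Construction I. Let
`k, α, t, M` be positive integers with `2tα ≤ kα - M`, `N = kα ≤ m`, and let
`g_1, …, g_N ∈ K` be linearly independent over `F_q`. If two files encoded by the outer
`[N, M, D = N - M + 1]` Gabidulin code, observed through an invertible `N × N` matrix `G`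
over `F_q` (the contents of any `k` nodes) and corrupted by error contributions
`e_j B_j` with `e_j ∈ K^{tα}` and `B_j` a `tα × N` matrix over `F_q`, agree, then the two
files coincide: when `2tα + 1 ≤ D`, the original file can be recovered from any `k` nodes
despite `t` statically corrupted nodes. -/
theorem construction_I_static_error_resilience
    (p e m : ℕ) [Fact p.Prime] (hq : 1 ≤ e)
    (K : Type*) [Field K] [Fintype K] [CharP K p]
    (k α t M : ℕ) (hk : 1 ≤ k) (hα : 1 ≤ α) (ht : 1 ≤ t) (hM : 1 ≤ M)
    (hD : 2 * t * α + M ≤ k * α)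
    (N : ℕ) (hN : N = k * α) (hNm : N ≤ m)
    (hcard : Fintype.card K = (p ^ e) ^ m)
    (g : Fin N → K) (hg : LinearIndependent (Fqsub p e K) g)
    (a₁ a₂ : Fin M → K)
    (G : Matrix (Fin N) (Fin N) (Fqsub p e K)) (hG : IsUnit G)
    (w₁ w₂ : Fin (t * α) → K)
    (B₁ B₂ : Matrix (Fin (t * α)) (Fin N) (Fqsub p e K))
    (heq : ∀ j : Fin N,
        (∑ i, (∑ l, a₁ l * g i ^ (p ^ e) ^ (l : ℕ)) * (G i j : K))
            + ∑ i, w₁ i * (B₁ i j : K) =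
        (∑ i, (∑ l, a₂ l * g i ^ (p ^ e) ^ (l : ℕ)) * (G i j : K))
            + ∑ i, w₂ i * (B₂ i j : K)) :
    a₁ = a₂ := by
  classical
  let F : Subfield K := Fqsub p e K
  haveI : Fintype F := Fintype.ofFinite _
  haveI : FiniteDimensional F K := ⟨⟨Finset.univ, by rw [Finset.coe_univ, Submodule.span_univ]⟩⟩
  have hp1 : 1 < p := (Fact.out : p.Prime).one_lt
  have hq1 : 1 < p ^ e := Nat.one_lt_pow (by omega) hp1
  by_contra hne
  obtain ⟨l₀, hl₀⟩ := Function.ne_iff.mp hne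
  set c : Fin M → K := fun l => a₁ l - a₂ l with hc
  have hcl₀ : c l₀ ≠ 0 := sub_ne_zero.mpr hl₀
  have hmem : ∀ s : K, s ∈ F → s ^ p ^ e = s := fun s hs => hs
  let φ : K →ₗ[F] K := linPoly p e K c F hmem
  set v : Fin N → K := fun i => ∑ l, c l * g i ^ (p ^ e) ^ (l : ℕ) with hv
  have hφg : ∀ i, φ (g i) = v i := fun i => rfl
  -- step: v ⬝ G' = r
  set r : Fin N → K := fun j => (∑ i, w₂ i * (B₂ i j : K)) - ∑ i, w₁ i * (B₁ i j : K) with hr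
  have hvG : ∀ j, ∑ i, v i * (G i j : K) = r j := by
    intro j
    have h1 : ∀ i, v i * (G i j : K) =
        (∑ l, a₁ l * g i ^ (p ^ e) ^ (l : ℕ)) * (G i j : K)
          - (∑ l, a₂ l * g i ^ (p ^ e) ^ (l : ℕ)) * (G i j : K) := by
      intro i
      rw [← sub_mul]
      congr 1
      rw [hv]
      simp only [hc, sub_mul, Finset.sum_sub_distrib]
    have h2 : ∑ i, v i * (G i j : K)
        = (∑ i, (∑ l, a₁ l * g i ^ (p ^ e) ^ (l : ℕ)) * (G i j : K))
          - ∑ i, (∑ l, a₂ l * g i ^ (p ^ e) ^ (l : ℕ)) * (G i j : K) := by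
      rw [Finset.sum_congr rfl (fun i _ => h1 i), Finset.sum_sub_distrib]
    rw [h2]
    show _ = ∑ i, w₂ i * (B₂ i j : K) - ∑ i, w₁ i * (B₁ i j : K)
    linear_combination heq j
  -- invert G
  let ρ : F →+* K := F.subtype
  have hGdet : IsUnit G.det := (Matrix.isUnit_iff_isUnit_det G).mp hG
  have hGH : G * G⁻¹ = 1 := Matrix.mul_nonsing_inv G hGdet
  have hGH' : (ρ.mapMatrix G) * (ρ.mapMatrix G⁻¹) = 1 := by
    rw [← map_mul, hGH, map_one]
  have hvec : Matrix.vecMul v (ρ.mapMatrix G) = r := by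
    funext j
    simpa [Matrix.vecMul, dotProduct, RingHom.mapMatrix_apply, Matrix.map_apply, ρ]
      using hvG j
  have hvH : v = Matrix.vecMul r (ρ.mapMatrix G⁻¹) := by
    rw [← hvec, Matrix.vecMul_vecMul, hGH', Matrix.vecMul_one]
  have hvi : ∀ i, v i = ∑ j, r j * ((G⁻¹ j i : F) : K) := by
    intro i
    conv_lhs => rw [hvH]
    simp [Matrix.vecMul, dotProduct, RingHom.mapMatrix_apply, Matrix.map_apply, ρ]
  -- the error span
  set u : (Fin (t * α) ⊕ Fin (t * α)) → K := Sum.elim w₁ w₂ with hu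
  set W : Submodule F K := Submodule.span F (Set.range u) with hW
  have hw₁W : ∀ i, w₁ i ∈ W := fun i =>
    Submodule.subset_span ⟨Sum.inl i, rfl⟩
  have hw₂W : ∀ i, w₂ i ∈ W := fun i =>
    Submodule.subset_span ⟨Sum.inr i, rfl⟩
  have hvW : ∀ i, v i ∈ W := by
    intro i
    rw [hvi i]
    apply Submodule.sum_mem
    intro j _
    rw [hr]
    simp only [sub_mul, Finset.sum_mul]
    apply sub_mem
    · apply Submodule.sum_mem
      intro i' _
      have : w₂ i' * (B₂ i' j : K) * ((G⁻¹ j i : F) : K)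
          = (B₂ i' j * G⁻¹ j i : F) • w₂ i' := by
        show _ = ((B₂ i' j * G⁻¹ j i : F) : K) * w₂ i'
        push_cast
        ring
      rw [this]
      exact Submodule.smul_mem _ _ (hw₂W i')
    · apply Submodule.sum_mem
      intro i' _
      have : w₁ i' * (B₁ i' j : K) * ((G⁻¹ j i : F) : K)
          = (B₁ i' j * G⁻¹ j i : F) • w₁ i' := by
        show _ = ((B₁ i' j * G⁻¹ j i : F) : K) * w₁ i'
        push_cast
        ring
      rw [this]
      exact Submodule.smul_mem _ _ (hw₁W i')
  have hWrank : Module.finrank F W ≤ 2 * t * α := by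
    have h := finrank_span_range_le K F u
    rw [Fintype.card_sum, Fintype.card_fin] at h
    have h2 : t * α + t * α = 2 * t * α := by ring
    rw [h2] at h
    exact h
  -- the restriction of φ to the span of g
  set V : Submodule F K := Submodule.span F (Set.range g) with hV
  let ψ : V →ₗ[F] K := φ.comp V.subtype
  have hrange : LinearMap.range ψ ≤ W := by
    have : LinearMap.range ψ = Submodule.map φ V := by
      rw [LinearMap.range_comp, Submodule.range_subtype]
    rw [this, hV, Submodule.map_span, Submodule.span_le]
    rintro x ⟨y, ⟨i, rfl⟩, rfl⟩
    simpa [hφg i] using hvW i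
  have hVrank : Module.finrank F V = N := by
    rw [hV, finrank_span_eq_card hg, Fintype.card_fin]
  have hrankker : M ≤ Module.finrank F (LinearMap.ker ψ) := by
    have h2 := LinearMap.finrank_range_add_finrank_ker ψ
    rw [hVrank] at h2
    have h3 : Module.finrank F (LinearMap.range ψ) ≤ 2 * t * α :=
      (Submodule.finrank_mono hrange).trans hWrank
    omega
  -- count points of the kernel
  haveI : Fintype (LinearMap.ker ψ) := Fintype.ofFinite _
  have hcardker : Fintype.card (LinearMap.ker ψ)
      = Fintype.card F ^ Module.finrank F (LinearMap.ker ψ) := @Module.card_eq_pow_finrank F (LinearMap.ker ψ) _ _ (LinearMap.ker ψ).module _ _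
  have hFcard : p ^ e ≤ Fintype.card F :=
    card_Fqsub_ge p e m hq K hcard F (fun x hx => hx)
  have hlb : (p ^ e) ^ M ≤ Fintype.card (LinearMap.ker ψ) := by
    rw [hcardker]
    calc (p ^ e) ^ M ≤ (p ^ e) ^ Module.finrank F (LinearMap.ker ψ) :=
          Nat.pow_le_pow_right (by positivity) hrankker
      _ ≤ Fintype.card F ^ Module.finrank F (LinearMap.ker ψ) :=
          Nat.pow_le_pow_left hFcard _
  -- the polynomial
  set P : K[X] := ∑ l : Fin M, C (c l) * X ^ ((p ^ e) ^ (l : ℕ)) with hP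
  have hcoeff : P.coeff ((p ^ e) ^ (l₀ : ℕ)) = c l₀ := by
    rw [hP, finset_sum_coeff]
    rw [Finset.sum_eq_single l₀]
    · simp [coeff_C_mul, coeff_X_pow]
    · intro b _ hb
      rw [coeff_C_mul, coeff_X_pow, if_neg, mul_zero]
      intro hbq
      exact hb (Fin.ext (Nat.pow_right_injective hq1 hbq.symm))
    · simp
  have hP0 : P ≠ 0 := fun h => hcl₀ (by rw [← hcoeff, h, coeff_zero])
  have hdeg : P.natDegree ≤ (p ^ e) ^ (M - 1) := by
    apply natDegree_sum_le_of_forall_le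
    intro l _
    refine (natDegree_C_mul_X_pow_le _ _).trans (Nat.pow_le_pow_right (by positivity) ?_)
    omega
  -- every kernel element is a root of P
  have hroot : ∀ x : LinearMap.ker ψ, P.eval ((x : V) : K) = 0 := by
    intro x
    have hx : ψ (x : V) = 0 := x.2
    have heval : P.eval ((x : V) : K) = φ ((x : V) : K) := by
      rw [hP, eval_finset_sum]
      simp only [eval_mul, eval_C, eval_pow, eval_X]
      rfl
    rw [heval]
    exact hx
  have hinj : Fintype.card (LinearMap.ker ψ) ≤ P.roots.toFinset.card := by
    rw [← Fintype.card_coe]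
    apply Fintype.card_le_of_injective (fun x => ⟨((x : V) : K), by
      rw [Multiset.mem_toFinset, mem_roots hP0]
      exact hroot x⟩)
    intro x y hxy
    exact Subtype.ext (Subtype.ext (by simpa using congrArg Subtype.val hxy))
  have hub : Fintype.card (LinearMap.ker ψ) ≤ (p ^ e) ^ (M - 1) :=
    hinj.trans ((P.roots.toFinset_card_le).trans ((card_roots' P).trans hdeg))
  have : (p ^ e) ^ M < (p ^ e) ^ M := by
    calc (p ^ e) ^ M ≤ (p ^ e) ^ (M - 1) := hlb.trans hub
      _ < (p ^ e) ^ M := Nat.pow_lt_pow_right hq1 (by omega)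
  omega
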